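/- Let x ∈ V* where V is a finite-dimensional JB*-triple with normalized associative inner product [·,·] (so [c,c]=1 for minimal tripotents c), identified with the functional x̃ = [·,x]. If x = Σ_{j=1}^r λ_j c_j is a spectral decomposition with λ_j ≥ 0 and c_j mutually orthogonal minimal tripotents, then the dual norm satisfies ‖x̃‖_* = Σ_{j=1}^r λ_j. -/

import Mathlib

open scoped ComplexConjugate

class JBStarTriple (V : Type*) [NormedAddCommGroup V] [NormedSpace ℂ V] where
  tp : V → V → V → V
  box : V → V → V →L[ℂ] V
  box_apply : ∀ a b x : V, box a b x = tp a b x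
  add_fst : ∀ a a' b c : V, tp (a + a') b c = tp a b c + tp a' b c
  smul_fst : ∀ (α : ℂ) (a b c : V), tp (α • a) b c = α • tp a b c
  symm_outer : ∀ a b c : V, tp a b c = tp c b a
  add_snd : ∀ a b b' c : V, tp a (b + b') c = tp a b c + tp a b' c
  conj_snd : ∀ (α : ℂ) (a b c : V), tp a (α • b) c = conj α • tp a b c
  jordan_identity : ∀ a b x y z : V,
    tp a b (tp x y z) = tp (tp a b x) y z - tp x (tp b a y) z + tp x y (tp a b z)
  hermitian : ∀ (a : V) (t : ℝ), ‖NormedSpace.exp ((Complex.I * (t : ℂ)) • box a a)‖ = 1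
  nonneg_spectrum : ∀ a : V, spectrum ℂ (box a a) ⊆ {z : ℂ | 0 ≤ z.re ∧ z.im = 0}
  norm_tp_le : ∀ a b c : V, ‖tp a b c‖ ≤ ‖a‖ * ‖b‖ * ‖c‖
  norm_tp_self : ∀ a : V, ‖tp a a a‖ = ‖a‖ ^ 3

namespace JBStarTriple

variable {V : Type*} [NormedAddCommGroup V] [NormedSpace ℂ V] [JBStarTriple V]

def IsTripotent (e : V) : Prop := tp e e e = e

def Orthogonal (a b : V) : Prop := ∀ x : V, tp a b x = 0

def IsMinimalTripotent (e : V) : Prop :=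
  IsTripotent e ∧ e ≠ 0 ∧ ∀ v : V, ∃ α : ℂ, tp e v e = α • e

def Peirce2 (e : V) : Set V := {x : V | tp e e x = x}

/-- `c ≤ e` for tripotents: `e - c` is a tripotent orthogonal to `c`. -/
def TripLE (c e : V) : Prop := IsTripotent (e - c) ∧ Orthogonal (e - c) c

/-- The box operator as a `ℂ`-linear map. -/
def boxL (x y : V) : V →ₗ[ℂ] V where
  toFun v := tp x y v
  map_add' u v := by
    show tp x y (u + v) = tp x y u + tp x y v
    rw [symm_outer x y (u + v), add_fst, ← symm_outer x y u, ← symm_outer x y v]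
  map_smul' α v := by
    show tp x y (α • v) = α • tp x y v
    rw [symm_outer x y (α • v), smul_fst, ← symm_outer x y v]

/-- The trace inner product `⟨x, y⟩ = Tr (x □ y)`. -/
noncomputable def trform (x y : V) : ℂ := LinearMap.trace ℂ V (boxL x y)

end JBStarTriple

open JBStarTriple
open scoped ComplexConjugate

section Aux

open JBStarTriple

variable {V : Type*} [NormedAddCommGroup V] [NormedSpace ℂ V] [JBStarTriple V]

lemma tp_zero_fst (b c : V) : tp (0 : V) b c = 0 := by
  have h := add_fst (0 : V) 0 b c
  rw [add_zero] at h
  exact (right_eq_add.mp h)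

lemma tp_zero_snd (a c : V) : tp a (0 : V) c = 0 := by
  have h := add_snd a (0 : V) 0 c
  rw [add_zero] at h
  exact (right_eq_add.mp h)

lemma tp_sum_fst {ι : Type*} (s : Finset ι) (f : ι → V) (b c : V) :
    tp (∑ i ∈ s, f i) b c = ∑ i ∈ s, tp (f i) b c :=
  map_sum (AddMonoidHom.mk' (fun a => tp a b c) (fun u v => add_fst u v b c)) f s

lemma tp_sum_snd {ι : Type*} (s : Finset ι) (a : V) (f : ι → V) (c : V) :
    tp a (∑ i ∈ s, f i) c = ∑ i ∈ s, tp a (f i) c :=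
  map_sum (AddMonoidHom.mk' (fun b => tp a b c) (fun u v => add_snd a u v c)) f s

lemma tp_sum_trd {ι : Type*} (s : Finset ι) (a b : V) (f : ι → V) :
    tp a b (∑ i ∈ s, f i) = ∑ i ∈ s, tp a b (f i) := by
  rw [symm_outer, tp_sum_fst]
  exact Finset.sum_congr rfl fun i _ => symm_outer _ _ _

lemma norm_one_of_tripotent {e : V} (he : IsTripotent e) (hne : e ≠ 0) : ‖e‖ = 1 := by
  have h3 := norm_tp_self e
  rw [he] at h3
  have h0 : 0 < ‖e‖ := norm_pos_iff.mpr hne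
  have h2 : ‖e‖ ^ 2 = 1 := by
    have hm : ‖e‖ * ‖e‖ ^ 2 = ‖e‖ * 1 := by
      rw [mul_one]
      calc ‖e‖ * ‖e‖ ^ 2 = ‖e‖ ^ 3 := by ring
        _ = ‖e‖ := h3.symm
    exact mul_left_cancel₀ (ne_of_gt h0) hm
  nlinarith [h2, h0, sq_nonneg (‖e‖ - 1), sq_nonneg (‖e‖ + 1)]

end Aux


/-- Let `V` be a finite-dimensional `JB*`-triple with a normalized associative inner
product `[·,·]` (so `[c,c] = 1` for every minimal tripotent `c`), and identify
`x ∈ V` with the functional `x̃ = [·,x]`.  If `x = Σ_j λ_j c_j` is a spectral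
decomposition with `λ_j ≥ 0` and `c_j` mutually orthogonal minimal tripotents, then
the dual norm satisfies `‖x̃‖_* = sup{|[y,x]| : ‖y‖ = 1} = Σ_j λ_j`. -/
theorem stmt14 {V : Type*} [NormedAddCommGroup V] [NormedSpace ℂ V] [JBStarTriple V]
    [FiniteDimensional ℂ V]
    (ip : V → V → ℂ)
    (hlin : ∀ x : V, IsLinearMap ℂ fun y => ip y x)
    (hconj : ∀ x y : V, ip y x = conj (ip x y))
    (hassoc : ∀ a b y z : V, ip (tp a b y) z = ip y (tp b a z))
    (hnormal : ∀ c : V, IsMinimalTripotent c → ip c c = 1)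
    (n : ℕ) (lam : Fin n → ℝ) (c : Fin n → V)
    (hlam : ∀ j, 0 ≤ lam j) (hc : ∀ j, IsMinimalTripotent (c j))
    (horth : ∀ i j, i ≠ j → Orthogonal (c i) (c j))
    (x : V) (hx : x = ∑ j, (lam j : ℂ) • c j) :
    sSup {r : ℝ | ∃ y : V, ‖y‖ = 1 ∧ r = ‖ip y x‖} = ∑ j, lam j := by
  classical
  have ip_zero_fst : ∀ z : V, ip 0 z = 0 := fun z => (hlin z).map_zero
  have ip_zero_snd : ∀ y : V, ip y 0 = 0 := fun y => by
    rw [hconj 0 y, ip_zero_fst y, map_zero]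
  have ip_sum_fst : ∀ {ι : Type} (s : Finset ι) (f : ι → V) (z : V),
      ip (∑ i ∈ s, f i) z = ∑ i ∈ s, ip (f i) z := by
    intro ι s f z
    have h := map_sum (IsLinearMap.mk' (fun w : V => ip w z) (hlin z)) f s
    simp only [IsLinearMap.mk'_apply] at h
    exact h
  -- norms of the minimal tripotents
  have norm_min : ∀ j, ‖c j‖ = 1 := fun j =>
    norm_one_of_tripotent (hc j).1 (hc j).2.1
  -- the key bound: |ip y (c j)| ≤ ‖y‖
  have key : ∀ (j : Fin n) (y : V), ‖ip y (c j)‖ ≤ ‖y‖ := by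
    intro j y
    obtain ⟨α, hα⟩ := (hc j).2.2 y
    have h1 : ip (tp (c j) y (c j)) (c j) = α := by
      rw [hα, (hlin (c j)).map_smul, hnormal (c j) (hc j)]
      simp
    have h2 : ip (tp (c j) y (c j)) (c j) = conj (ip y (c j)) := by
      rw [hassoc (c j) y (c j) (c j), symm_outer y (c j) (c j),
        hconj (tp (c j) (c j) y) (c j), hassoc (c j) (c j) y (c j), (hc j).1]
    have hy : ip y (c j) = conj α := by
      have := h1 ▸ h2
      calc ip y (c j) = conj (conj (ip y (c j))) := by rw [Complex.conj_conj]
        _ = conj α := by rw [this]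
    have hnorm : ‖tp (c j) y (c j)‖ ≤ ‖y‖ := by
      have h := norm_tp_le (c j) y (c j)
      rw [norm_min j] at h
      linarith [h]
    calc ‖ip y (c j)‖ = ‖α‖ := by
          rw [hy, Complex.norm_conj]
      _ = ‖α • c j‖ := by rw [norm_smul, norm_min j, mul_one]
      _ = ‖tp (c j) y (c j)‖ := by rw [hα]
      _ ≤ ‖y‖ := hnorm
  -- expanding ip y x
  have ip_x : ∀ y : V, ip y x = ∑ j, (lam j : ℂ) * ip y (c j) := by
    intro y
    have h1 : ip x y = ∑ j, (lam j : ℂ) * ip (c j) y := by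
      rw [hx, ip_sum_fst]
      refine Finset.sum_congr rfl fun j _ => ?_
      rw [(hlin y).map_smul]
      rfl
    rw [hconj x y, h1, map_sum]
    refine Finset.sum_congr rfl fun j _ => ?_
    rw [map_mul, Complex.conj_ofReal, ← hconj (c j) y]
  have hsum_nonneg : (0 : ℝ) ≤ ∑ j, lam j := Finset.sum_nonneg fun j _ => hlam j
  -- upper bound
  have upper : ∀ y : V, ‖y‖ = 1 → ‖ip y x‖ ≤ ∑ j, lam j := by
    intro y hy
    rw [ip_x y]
    calc ‖∑ j, (lam j : ℂ) * ip y (c j)‖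
        ≤ ∑ j, ‖(lam j : ℂ) * ip y (c j)‖ := norm_sum_le _ _
      _ ≤ ∑ j, lam j := by
          refine Finset.sum_le_sum fun j _ => ?_
          rw [norm_mul, Complex.norm_real, Real.norm_eq_abs, abs_of_nonneg (hlam j)]
          calc lam j * ‖ip y (c j)‖ ≤ lam j * ‖y‖ :=
                mul_le_mul_of_nonneg_left (key j y) (hlam j)
            _ = lam j := by rw [hy, mul_one]
  refine le_antisymm (Real.sSup_le ?_ hsum_nonneg) ?_
  · rintro r ⟨y, hy, rfl⟩
    exact upper y hy
  · rcases Nat.eq_zero_or_pos n with hn | hn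
    · subst hn
      have hz : (∑ j : Fin 0, lam j) = 0 := by simp
      rw [hz]
      apply Real.sSup_nonneg
      rintro r ⟨y, hy, rfl⟩
      exact norm_nonneg _
    · -- the element e = ∑ c j attains the supremum
      set e : V := ∑ j, c j with he
      have ipcc : ∀ i j : Fin n, i ≠ j → ip (c i) (c j) = 0 := by
        intro i j hij
        have h1 : ip (c i) (c j) = ip (c i) (tp (c i) (c i) (c j)) := by
          conv_lhs => rw [← (hc i).1]
          exact hassoc (c i) (c i) (c i) (c j)
        rw [h1, symm_outer (c i) (c i) (c j), horth j i hij.symm (c i), ip_zero_snd]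
      have ip_e_c : ∀ j, ip e (c j) = 1 := by
        intro j
        rw [he, ip_sum_fst]
        rw [Finset.sum_eq_single_of_mem j (Finset.mem_univ j)
          (fun i _ hij => ipcc i j hij)]
        exact hnormal (c j) (hc j)
      have htrip : IsTripotent e := by
        show tp e e e = e
        rw [he, tp_sum_fst]
        refine Finset.sum_congr rfl fun i _ => ?_
        rw [tp_sum_snd]
        rw [Finset.sum_eq_single_of_mem i (Finset.mem_univ i)
          (fun j _ hji => horth i j (Ne.symm hji) _)]
        rw [tp_sum_trd]
        rw [Finset.sum_eq_single_of_mem i (Finset.mem_univ i)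
          (fun k _ hki => by rw [symm_outer]; exact horth k i hki (c i))]
        exact (hc i).1
      have hene : e ≠ 0 := by
        intro h
        have h1 := ip_e_c ⟨0, hn⟩
        rw [h, ip_zero_fst] at h1
        exact one_ne_zero h1.symm
      have hnorme : ‖e‖ = 1 := norm_one_of_tripotent htrip hene
      have ip_e_x : ip e x = ((∑ j, lam j : ℝ) : ℂ) := by
        rw [ip_x e]
        rw [Complex.ofReal_sum]
        refine Finset.sum_congr rfl fun j _ => ?_
        rw [ip_e_c j, mul_one]
      refine le_csSup ⟨∑ j, lam j, ?_⟩ ⟨e, hnorme, ?_⟩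
      · rintro r ⟨y, hy, rfl⟩
        exact upper y hy
      · rw [ip_e_x, Complex.norm_real, Real.norm_eq_abs]
        exact (abs_of_nonneg hsum_nonneg).symm
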